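/- If in the SEP estimator each hypernode w is chosen from H(v) with probability P(w) = Cost(T_w) / Σ_{x ∈ H(v)} Cost(T_x) (assuming Cost(T_x) > 0 for all relevant hypernodes x so this is well defined), then C_SEP is a zero-variance estimator: with probability one, C_SEP(T_v) = Cost(T_v)/|v| for every hypernode v. (Paper's Theorem 2.) -/

import Mathlib

open Finset

/-- A finite rooted tree on a finite node type `V`.  The root is its own parent,
every non-root node has a parent whose depth is one smaller, and the root is the
unique node of depth `0`. -/
structure FinRootedTree (V : Type) [Fintype V] [DecidableEq V] where
  root : V
  parent : V → V
  depth : V → ℕ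
  depth_root : depth root = 0
  parent_root : parent root = root
  depth_parent : ∀ v, v ≠ root → depth (parent v) + 1 = depth v
  eq_root_of_depth_zero : ∀ v, depth v = 0 → v = root

namespace FinRootedTree

variable {V : Type} [Fintype V] [DecidableEq V]

/-- The set of children of a node. -/
def children (T : FinRootedTree V) (x : V) : Finset V :=
  Finset.univ.filter fun w => w ≠ T.root ∧ T.parent w = x

/-- `S(v)`: the set of all children of nodes of a hypernode `v`. -/
def succs (T : FinRootedTree V) (v : Finset V) : Finset V :=
  v.biUnion T.children

/-- The set of nodes of the subtree rooted at `x` (the descendants of `x`,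
including `x` itself). -/
def desc (T : FinRootedTree V) (x : V) : Finset V :=
  Finset.univ.filter fun w =>
    x ∈ (Finset.range (T.depth w + 1)).image fun k => T.parent^[k] w

/-- `Cost(T_x)`: the total cost of the subtree rooted at `x`. -/
noncomputable def subtreeCost (T : FinRootedTree V) (c : V → ℝ) (x : V) : ℝ :=
  ∑ w ∈ T.desc x, c w

/-- `Cost(T_v)`: the total cost of the forest rooted at the hypernode `v`. -/
noncomputable def forestCost (T : FinRootedTree V) (c : V → ℝ) (v : Finset V) : ℝ :=
  ∑ x ∈ v, T.subtreeCost c x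

/-- `H(v)`: the hyperchildren of `v` for budget `B`, i.e. the subsets of `S(v)`
of size `min B |S(v)|`. -/
def hyper (T : FinRootedTree V) (B : ℕ) (v : Finset V) : Finset (Finset V) :=
  (T.succs v).powersetCard (min B (T.succs v).card)

/-- A hypernode: a nonempty set of distinct nodes, all at the same depth. -/
def IsHypernode (T : FinRootedTree V) (v : Finset V) : Prop :=
  v.Nonempty ∧ ∀ a ∈ v, ∀ b ∈ v, T.depth a = T.depth b

/-- Expectation functional of the SEP estimator `C_SEP(T_v)` (with selection
probabilities `P`): `sepE T c B P fuel v g` is `E[g(C_SEP(T_v))]`, defined by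
the recursion of Algorithm 1, with enough fuel to reach the leaves. -/
noncomputable def sepE (T : FinRootedTree V) (c : V → ℝ) (B : ℕ)
    (P : Finset V → Finset V → ℝ) : ℕ → Finset V → (ℝ → ℝ) → ℝ
  | 0, v, g => g ((∑ x ∈ v, c x) / (v.card : ℝ))
  | fuel + 1, v, g =>
      if T.succs v = ∅ then g ((∑ x ∈ v, c x) / (v.card : ℝ))
      else
        ∑ w ∈ T.hyper B v,
          P v w *
            sepE T c B P fuel w fun y =>
              g ((∑ x ∈ v, c x) / (v.card : ℝ) +
                (w.card : ℝ) * y /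
                  ((v.card : ℝ) * ((((T.succs v).card - 1).choose (w.card - 1) : ℕ) : ℝ) *
                    P v w))

section Aux

variable {V : Type} [Fintype V] [DecidableEq V]

lemma depth_iterate_aux (T : FinRootedTree V) (w : V) :
    ∀ k, k ≤ T.depth w → T.depth (T.parent^[k] w) = T.depth w - k := by
  intro k
  induction k with
  | zero => simp
  | succ k ih =>
    intro hk
    have h1 := ih (Nat.le_of_succ_le hk)
    rw [Function.iterate_succ_apply']
    have hne : T.parent^[k] w ≠ T.root := by
      intro h
      rw [h, T.depth_root] at h1
      omega
    have h2 := T.depth_parent _ hne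
    omega

lemma mem_desc_aux (T : FinRootedTree V) {x w : V} :
    w ∈ T.desc x ↔ T.depth x ≤ T.depth w ∧ T.parent^[T.depth w - T.depth x] w = x := by
  simp only [FinRootedTree.desc, Finset.mem_filter, Finset.mem_univ, true_and,
    Finset.mem_image, Finset.mem_range]
  constructor
  · rintro ⟨k, hk, rfl⟩
    have hk' : k ≤ T.depth w := Nat.lt_succ_iff.mp hk
    have hd := depth_iterate_aux T w k hk'
    refine ⟨by omega, ?_⟩
    have : T.depth w - T.depth (T.parent^[k] w) = k := by omega
    rw [this]
  · rintro ⟨h1, h2⟩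
    exact ⟨_, by omega, h2⟩

lemma mem_children_aux (T : FinRootedTree V) {x y : V} :
    y ∈ T.children x ↔ y ≠ T.root ∧ T.parent y = x := by
  simp [FinRootedTree.children]

lemma depth_child_aux (T : FinRootedTree V) {x y : V} (h : y ∈ T.children x) :
    T.depth y = T.depth x + 1 := by
  rw [mem_children_aux] at h
  have := T.depth_parent y h.1
  rw [h.2] at this
  omega

lemma desc_decomp_aux (T : FinRootedTree V) (x : V) :
    T.desc x = insert x ((T.children x).biUnion T.desc) := by
  ext w
  simp only [Finset.mem_insert, Finset.mem_biUnion]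
  constructor
  · intro hw
    rw [mem_desc_aux] at hw
    obtain ⟨h1, h2⟩ := hw
    by_cases hd : T.depth w = T.depth x
    · left
      rw [hd] at h2
      simpa using h2
    · right
      have hlt : T.depth x < T.depth w := lt_of_le_of_ne h1 (Ne.symm hd)
      set k := T.depth w - T.depth x with hkdef
      have hk1 : 1 ≤ k := by omega
      have hkle : k - 1 ≤ T.depth w := by omega
      have hdy : T.depth (T.parent^[k - 1] w) = T.depth w - (k - 1) :=
        depth_iterate_aux T w _ hkle
      refine ⟨T.parent^[k - 1] w, ?_, ?_⟩
      · rw [mem_children_aux]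
        constructor
        · intro h
          rw [h, T.depth_root] at hdy
          omega
        · have hks : k = (k - 1) + 1 := by omega
          have : T.parent (T.parent^[k - 1] w) = T.parent^[k] w := by
            calc T.parent (T.parent^[k - 1] w)
                = T.parent^[(k - 1) + 1] w := (Function.iterate_succ_apply' _ _ _).symm
              _ = T.parent^[k] w := by rw [← hks]
          rw [this, h2]
      · rw [mem_desc_aux]
        refine ⟨by omega, ?_⟩
        have : T.depth w - T.depth (T.parent^[k - 1] w) = k - 1 := by omega
        rw [this]
  · rintro (rfl | ⟨y, hy, hwy⟩)
    · rw [mem_desc_aux]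
      simp
    · rw [mem_desc_aux] at hwy ⊢
      obtain ⟨h1, h2⟩ := hwy
      have hdy := depth_child_aux T hy
      rw [mem_children_aux] at hy
      refine ⟨by omega, ?_⟩
      have harith : T.depth w - T.depth x = (T.depth w - T.depth y) + 1 := by omega
      rw [harith, Function.iterate_succ_apply', h2, hy.2]

lemma disjoint_desc_aux (T : FinRootedTree V) {y z : V} (h : T.depth y = T.depth z)
    (hne : y ≠ z) : Disjoint (T.desc y) (T.desc z) := by
  rw [Finset.disjoint_left]
  intro w hwy hwz
  rw [mem_desc_aux] at hwy hwz
  apply hne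
  rw [← hwy.2, ← hwz.2, h]

lemma subtreeCost_rec_aux (T : FinRootedTree V) (c : V → ℝ) (x : V) :
    T.subtreeCost c x = c x + ∑ y ∈ T.children x, T.subtreeCost c y := by
  unfold FinRootedTree.subtreeCost
  rw [desc_decomp_aux, Finset.sum_insert, Finset.sum_biUnion]
  · intro a ha b hb hab
    exact disjoint_desc_aux T (by rw [depth_child_aux T ha, depth_child_aux T hb]) hab
  · intro hx
    rw [Finset.mem_biUnion] at hx
    obtain ⟨y, hy, hxy⟩ := hx
    rw [mem_desc_aux] at hxy
    have := depth_child_aux T hy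
    omega

lemma children_disjoint_aux (T : FinRootedTree V) {x x' : V} (h : x ≠ x') :
    Disjoint (T.children x) (T.children x') := by
  rw [Finset.disjoint_left]
  intro y hy hy'
  rw [mem_children_aux] at hy hy'
  exact h (hy.2 ▸ hy'.2)

lemma forestCost_rec_aux (T : FinRootedTree V) (c : V → ℝ) (v : Finset V) :
    T.forestCost c v = (∑ x ∈ v, c x) + T.forestCost c (T.succs v) := by
  unfold FinRootedTree.forestCost FinRootedTree.succs
  rw [Finset.sum_biUnion (fun a _ b _ hab => children_disjoint_aux T hab),
    ← Finset.sum_add_distrib]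
  exact Finset.sum_congr rfl fun x _ => subtreeCost_rec_aux T c x

lemma card_filter_powersetCard_aux (s : Finset V) (x : V) (hx : x ∈ s) (k : ℕ) (hk : 1 ≤ k) :
    ((s.powersetCard k).filter (fun w => x ∈ w)).card = (s.card - 1).choose (k - 1) := by
  have hcard : ((s.powersetCard k).filter (fun w => x ∈ w)).card
      = ((s.erase x).powersetCard (k - 1)).card := by
    apply Finset.card_nbij' (fun w => w.erase x) (fun t => insert x t)
    · intro w hw
      rw [Finset.mem_coe, Finset.mem_filter, Finset.mem_powersetCard] at hw
      rw [Finset.mem_coe, Finset.mem_powersetCard]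
      exact ⟨Finset.erase_subset_erase x hw.1.1,
        by rw [Finset.card_erase_of_mem hw.2, hw.1.2]⟩
    · intro t ht
      rw [Finset.mem_coe, Finset.mem_powersetCard] at ht
      rw [Finset.mem_coe, Finset.mem_filter, Finset.mem_powersetCard]
      have hxt : x ∉ t := fun h => (Finset.mem_erase.mp (ht.1 h)).1 rfl
      refine ⟨⟨Finset.insert_subset hx (ht.1.trans (Finset.erase_subset x s)), ?_⟩,
        Finset.mem_insert_self x t⟩
      rw [Finset.card_insert_of_notMem hxt, ht.2]
      omega
    · intro w hw
      rw [Finset.mem_coe, Finset.mem_filter] at hw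
      exact Finset.insert_erase hw.2
    · intro t ht
      rw [Finset.mem_coe, Finset.mem_powersetCard] at ht
      have hxt : x ∉ t := fun h => (Finset.mem_erase.mp (ht.1 h)).1 rfl
      exact Finset.erase_insert hxt
  rw [hcard, Finset.card_powersetCard, Finset.card_erase_of_mem hx]

lemma sum_powersetCard_sum_aux (s : Finset V) (k : ℕ) (hk : 1 ≤ k) (f : V → ℝ) :
    ∑ w ∈ s.powersetCard k, ∑ x ∈ w, f x
      = ((s.card - 1).choose (k - 1) : ℝ) * ∑ x ∈ s, f x := by
  have h1 : ∀ w ∈ s.powersetCard k, ∑ x ∈ w, f x = ∑ x ∈ s, if x ∈ w then f x else 0 := by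
    intro w hw
    rw [Finset.mem_powersetCard] at hw
    rw [← Finset.sum_filter, Finset.filter_mem_eq_inter, Finset.inter_eq_right.mpr hw.1]
  rw [Finset.sum_congr rfl h1, Finset.sum_comm]
  rw [Finset.mul_sum]
  refine Finset.sum_congr rfl fun x hx => ?_
  rw [← Finset.sum_filter, Finset.sum_const, nsmul_eq_mul,
    card_filter_powersetCard_aux s x hx k hk]

end Aux

lemma sep_key (T : FinRootedTree V) (c : V → ℝ)
    (hpos : ∀ x : V, 0 < T.subtreeCost c x)
    (B : ℕ) (hB : 1 ≤ B) (P : Finset V → Finset V → ℝ)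
    (hP : ∀ u w : Finset V,
      P u w = T.forestCost c w / ∑ x ∈ T.hyper B u, T.forestCost c x) :
    ∀ fuel (v : Finset V), T.IsHypernode v →
      (∀ x ∈ v, ∀ y : V, T.depth y ≤ T.depth x + fuel) →
      ∀ g : ℝ → ℝ, sepE T c B P fuel v g = g (T.forestCost c v / (v.card : ℝ)) := by
  intro fuel
  induction fuel with
  | zero =>
    intro v hv hdep g
    have hsucc : T.succs v = ∅ := by
      rw [Finset.eq_empty_iff_forall_notMem]
      intro y hy
      rw [FinRootedTree.succs, Finset.mem_biUnion] at hy
      obtain ⟨x, hx, hxy⟩ := hy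
      have h1 := depth_child_aux T hxy
      have h2 := hdep x hx y
      omega
    have hF : T.forestCost c v = ∑ x ∈ v, c x := by
      rw [forestCost_rec_aux, hsucc]
      simp [FinRootedTree.forestCost]
    simp only [sepE, hF]
  | succ fuel ih =>
    intro v hv hdep g
    by_cases hS : T.succs v = ∅
    · have hF : T.forestCost c v = ∑ x ∈ v, c x := by
        rw [forestCost_rec_aux, hS]
        simp [FinRootedTree.forestCost]
      simp only [sepE, if_pos hS, hF]
    · simp only [sepE, if_neg hS]
      obtain ⟨hvne, hvd⟩ := hv
      obtain ⟨x0, hx0⟩ := hvne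
      have hvcard : (0:ℝ) < (v.card : ℝ) :=
        Nat.cast_pos.2 (Finset.card_pos.2 ⟨x0, hx0⟩)
      have hsne : (T.succs v).Nonempty := Finset.nonempty_of_ne_empty hS
      have hn : 1 ≤ (T.succs v).card := Finset.card_pos.2 hsne
      have hk : 1 ≤ min B (T.succs v).card := le_min hB hn
      have hdepth_s : ∀ y ∈ T.succs v, T.depth y = T.depth x0 + 1 := by
        intro y hy
        rw [FinRootedTree.succs, Finset.mem_biUnion] at hy
        obtain ⟨x, hx, hxy⟩ := hy
        rw [depth_child_aux T hxy, hvd x hx x0 hx0]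
      have hyperw : ∀ w ∈ T.hyper B v, w ⊆ T.succs v ∧ w.card = min B (T.succs v).card := by
        intro w hw
        rw [FinRootedTree.hyper, Finset.mem_powersetCard] at hw
        exact hw
      have hSsum : ∑ x ∈ T.hyper B v, T.forestCost c x
          = ((((T.succs v).card - 1).choose (min B (T.succs v).card - 1) : ℕ) : ℝ)
              * T.forestCost c (T.succs v) := by
        rw [FinRootedTree.hyper]
        exact sum_powersetCard_sum_aux (T.succs v) _ hk _
      have hFs : 0 < T.forestCost c (T.succs v) :=
        Finset.sum_pos (fun x _ => hpos x) hsne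
      have hC : (0:ℝ) < ((((T.succs v).card - 1).choose (min B (T.succs v).card - 1) : ℕ) : ℝ) :=
        Nat.cast_pos.2 (Nat.choose_pos (by omega))
      have hSum : 0 < ∑ x ∈ T.hyper B v, T.forestCost c x := by
        rw [hSsum]; positivity
      have hterm : ∀ w ∈ T.hyper B v,
          P v w * sepE T c B P fuel w (fun y =>
            g ((∑ x ∈ v, c x) / (v.card : ℝ) +
              (w.card : ℝ) * y /
                ((v.card : ℝ) * ((((T.succs v).card - 1).choose (w.card - 1) : ℕ) : ℝ) *
                  P v w)))
          = P v w * g (T.forestCost c v / (v.card : ℝ)) := by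
        intro w hw
        obtain ⟨hws, hwk⟩ := hyperw w hw
        have hwne : w.Nonempty := Finset.card_pos.mp (by omega)
        have hhyp : T.IsHypernode w :=
          ⟨hwne, fun a ha b hb => by rw [hdepth_s a (hws ha), hdepth_s b (hws hb)]⟩
        have hdep' : ∀ z ∈ w, ∀ y : V, T.depth y ≤ T.depth z + fuel := by
          intro z hz y
          rw [hdepth_s z (hws hz)]
          have := hdep x0 hx0 y
          omega
        rw [ih w hhyp hdep']
        congr 2
        have hFw : 0 < T.forestCost c w := Finset.sum_pos (fun x _ => hpos x) hwne
        have hwcard : (0:ℝ) < (w.card : ℝ) := Nat.cast_pos.2 (Finset.card_pos.2 hwne)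
        rw [hP v w, hSsum, hwk, forestCost_rec_aux T c v]
        field_simp
      rw [Finset.sum_congr rfl hterm, ← Finset.sum_mul]
      have hone : ∑ w ∈ T.hyper B v, P v w = 1 := by
        rw [Finset.sum_congr rfl (fun w _ => hP v w), ← Finset.sum_div,
          div_self (ne_of_gt hSum)]
      rw [hone, one_mul]

/-- Paper's Theorem 2: if each hypernode `w` is chosen from `H(v)` with
probability proportional to `Cost(T_w)`, then `C_SEP` is a zero-variance
estimator: with probability one, `C_SEP(T_v) = Cost(T_v)/|v|` (i.e. the
distribution of `C_SEP(T_v)` is the point mass at `Cost(T_v)/|v|`, so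
`E[g(C_SEP(T_v))] = g(Cost(T_v)/|v|)` for every `g`). -/
theorem sep_zero_variance (T : FinRootedTree V) (c : V → ℝ) (hc : ∀ x, 0 ≤ c x)
    (hpos : ∀ x : V, 0 < T.subtreeCost c x)
    (B : ℕ) (hB : 1 ≤ B) (P : Finset V → Finset V → ℝ)
    (hP : ∀ u w : Finset V,
      P u w = T.forestCost c w / ∑ x ∈ T.hyper B u, T.forestCost c x)
    (v : Finset V) (hv : T.IsHypernode v) (g : ℝ → ℝ) :
    sepE T c B P (Fintype.card V) v g = g (T.forestCost c v / (v.card : ℝ)) := by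
  apply sep_key T c hpos B hB P hP (Fintype.card V) v hv
  intro x hx y
  have h1 : T.depth y < Fintype.card V := by
    have hle : (Finset.range (T.depth y + 1)).card ≤ Fintype.card V := by
      rw [← Finset.card_univ]
      apply Finset.card_le_card_of_injOn (fun j => T.parent^[j] y)
        (fun _ _ => Finset.mem_univ _)
      intro a ha b hb hab
      rw [Finset.mem_coe, Finset.mem_range, Nat.lt_succ_iff] at ha hb
      have hda := depth_iterate_aux T y a ha
      have hdb := depth_iterate_aux T y b hb
      have hab' : T.parent^[a] y = T.parent^[b] y := hab
      rw [hab'] at hda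
      omega
    rw [Finset.card_range] at hle
    omega
  omega

end FinRootedTree
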